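/- In the UQC setting with bias β ∈ (0,1/2), the agent's return from learning the state under the interval delegation set [β, y₀], namely Δ_A(y₀) = ∫_0^1 [u_A(min(θ+β,y₀),θ) − u_A(y*,θ)] dθ where y* = min(1/2+β, y₀) is the agent's uninformed decision, is strictly increasing in y₀ for y₀ ∈ (β, 1/2+β). -/

import Mathlib

open Set

lemma stmt_17_key (β y₀ : ℝ) (h1 : β < y₀) (h2 : y₀ < 1/2 + β) :
    (∫ θ in (0:ℝ)..1,
        ((-(min (θ + β) y₀ - θ - β) ^ 2) - (-(min (1/2 + β) y₀ - θ - β) ^ 2)))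
      = (y₀ - β)^3 / 3 := by
  have hmin : min (1/2 + β) y₀ = y₀ := min_eq_right h2.le
  set c : ℝ := y₀ - β with hc
  have hc0 : 0 < c := by simp [hc]; linarith
  have hc1 : c < 1 := by simp [hc]; linarith
  have hcont : Continuous (fun θ : ℝ =>
      ((-(min (θ + β) y₀ - θ - β) ^ 2) - (-(min (1/2 + β) y₀ - θ - β) ^ 2))) := by
    fun_prop
  have hsplit :
      (∫ θ in (0:ℝ)..c,
        ((-(min (θ + β) y₀ - θ - β) ^ 2) - (-(min (1/2 + β) y₀ - θ - β) ^ 2)))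
      + (∫ θ in c..1,
        ((-(min (θ + β) y₀ - θ - β) ^ 2) - (-(min (1/2 + β) y₀ - θ - β) ^ 2)))
      = (∫ θ in (0:ℝ)..1,
        ((-(min (θ + β) y₀ - θ - β) ^ 2) - (-(min (1/2 + β) y₀ - θ - β) ^ 2))) :=
    intervalIntegral.integral_add_adjacent_intervals
      (hcont.intervalIntegrable _ _) (hcont.intervalIntegrable _ _)
  rw [← hsplit]
  have h1eq : (∫ θ in (0:ℝ)..c,
        ((-(min (θ + β) y₀ - θ - β) ^ 2) - (-(min (1/2 + β) y₀ - θ - β) ^ 2)))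
      = ∫ θ in (0:ℝ)..c, (y₀ - θ - β)^2 := by
    apply intervalIntegral.integral_congr
    intro θ hθ
    rw [uIcc_of_le hc0.le] at hθ
    have hm : min (θ + β) y₀ = θ + β := min_eq_left (by linarith [hθ.2])
    simp only [hm, hmin]
    ring
  have h2eq : (∫ θ in c..(1:ℝ),
        ((-(min (θ + β) y₀ - θ - β) ^ 2) - (-(min (1/2 + β) y₀ - θ - β) ^ 2)))
      = 0 := by
    rw [← intervalIntegral.integral_zero (a := c) (b := (1:ℝ))]
    apply intervalIntegral.integral_congr
    intro θ hθ
    rw [uIcc_of_le hc1.le] at hθ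
    have hm : min (θ + β) y₀ = y₀ := min_eq_right (by linarith [hθ.1])
    simp only [hm, hmin]
    ring
  rw [h1eq, h2eq, add_zero]
  have := intervalIntegral.integral_eq_sub_of_hasDerivAt
    (f := fun θ : ℝ => -(y₀ - θ - β)^3 / 3)
    (f' := fun θ : ℝ => (y₀ - θ - β)^2)
    (a := 0) (b := c)
    (fun θ _ => by
      have : HasDerivAt (fun θ : ℝ => -(y₀ - θ - β)^3 / 3) ((y₀ - θ - β)^2) θ := by
        have h : HasDerivAt (fun θ : ℝ => y₀ - θ - β) (-1) θ := by
          simpa using ((hasDerivAt_id θ).const_sub y₀).sub_const β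
        have := ((h.fun_pow 3).fun_neg.div_const 3)
        refine this.congr_deriv ?_
        ring
      exact this)
    ((continuous_const.sub continuous_id |>.sub continuous_const).pow 2
      |>.intervalIntegrable 0 c)
  rw [this]
  simp only [hc]
  ring

/-- In the UQC setting with bias `β ∈ (0,1/2)`, the agent's return from learning the state
under the interval delegation set `[β, y₀]` is strictly increasing in `y₀` on `(β, 1/2+β)`. -/
theorem stmt_17 (β : ℝ) (hβ : β ∈ Ioo (0:ℝ) (1/2)) :
    StrictMonoOn
      (fun y₀ => ∫ θ in (0:ℝ)..1,
        ((-(min (θ + β) y₀ - θ - β) ^ 2) - (-(min (1/2 + β) y₀ - θ - β) ^ 2)))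
      (Ioo β (1/2 + β)) := by
  intro x hx y hy hxy
  simp only
  rw [stmt_17_key β x hx.1 hx.2, stmt_17_key β y hy.1 hy.2]
  have h1 : 0 ≤ x - β := by linarith [hx.1]
  have h2 : x - β < y - β := by linarith
  have := pow_lt_pow_left₀ h2 h1 (by norm_num : 3 ≠ 0)
  linarith
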